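/- Fix ε > 0 and a finite Borel measure m on X. Suppose there exist K < ∞ and β ∈ (0,1) such that [P₁^n m](B) ≤ K β^n for every n ≥ 1 and every Borel B ⊆ X \ U(ε) with m(B) > 0. Then for every α with β < α < 1, every such B, and every n ≥ 1, m{x ∈ X : v^n{w ∈ W^n : T^n(x,w) ∈ B} ≥ α^n} ≤ K (β/α)^n. In particular, x = 0 is almost everywhere stochastically stable with geometric decay with respect to m. -/

import Mathlib

open MeasureTheory Filter Metric Set

noncomputable section

/-- The restriction `P₁` of the Perron–Frobenius operator to a set `S` (= `X \ {0}`):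
`[P₁ μ](B) = ∫_S ∫_W χ_B(T(x,y)) dv(y) dμ(x)`, with the output measure restricted to `S`
(so that the operator can be iterated). -/
def P1 {α Wsp : Type*} [MeasurableSpace α] [MeasurableSpace Wsp]
    (T : α → Wsp → α) (v : Measure Wsp) (S : Set α) (μ : Measure α) : Measure α :=
  ((μ.restrict S).bind fun x => v.map (T x)).restrict S

/-- The `n`-step composed map `T^n : X × W^n → X`. -/
def Tn {α Wsp : Type*} (T : α → Wsp → α) : (n : ℕ) → α → (Fin n → Wsp) → α
  | 0, x, _ => x
  | n + 1, x, w => T (Tn T n x fun i => w i.castSucc) (w (Fin.last n))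

section Aux

variable {E Wsp : Type*} [MeasurableSpace E] [MeasurableSpace Wsp]
variable {T : E → Wsp → E} {v : Measure Wsp}

lemma measurable_uncurry_Tn (hT : Measurable (Function.uncurry T)) (n : ℕ) :
    Measurable (Function.uncurry (Tn T n)) := by
  induction n with
  | zero => exact measurable_fst
  | succ n ih =>
      have h1 : Measurable fun p : E × (Fin (n+1) → Wsp) =>
          Tn T n p.1 (fun i => p.2 i.castSucc) := by
        have hm : Measurable fun p : E × (Fin (n+1) → Wsp) =>
            (p.1, fun i : Fin n => p.2 i.castSucc) :=
          measurable_fst.prodMk (measurable_pi_lambda _ fun i =>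
            (measurable_pi_apply _).comp measurable_snd)
        exact ih.comp hm
      have h2 : Measurable fun p : E × (Fin (n+1) → Wsp) => p.2 (Fin.last n) :=
        (measurable_pi_apply _).comp measurable_snd
      exact hT.comp (h1.prodMk h2)

lemma Tn_zero [Zero E] (heq : ∀ y, T 0 y = 0) : ∀ n (w : Fin n → Wsp), Tn T n 0 w = 0 := by
  intro n
  induction n with
  | zero => intro w; rfl
  | succ n ih =>
      intro w
      show T (Tn T n 0 fun i => w i.castSucc) (w (Fin.last n)) = 0
      rw [ih, heq]

lemma Tn_succ_left : ∀ (n : ℕ) (x : E) (w : Fin (n+1) → Wsp),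
    Tn T (n+1) x w = Tn T n (T x (w 0)) (fun i => w i.succ) := by
  intro n
  induction n with
  | zero =>
      intro x w
      show T (Tn T 0 x fun i => w i.castSucc) (w (Fin.last 0)) = T x (w 0)
      rfl
  | succ n ih =>
      intro x w
      show T (Tn T (n+1) x fun i => w i.castSucc) (w (Fin.last (n+1)))
        = T (Tn T n (T x (w 0)) fun i => (w i.succ.castSucc)) (w (Fin.last n).succ)
      rw [ih x (fun i => w i.castSucc)]
      simp [Fin.succ_last, Fin.castSucc_zero]

end Aux

section Aux2

variable {E Wsp : Type*} [MeasurableSpace E] [MeasurableSpace Wsp]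
variable {T : E → Wsp → E} {v : Measure Wsp} [IsProbabilityMeasure v]

lemma measurable_kernel (hT : Measurable (Function.uncurry T)) :
    Measurable fun x : E => v.map (T x) := by
  apply Measure.measurable_of_measurable_coe
  intro s hs
  have hTx : ∀ x : E, Measurable (T x) := fun x =>
    hT.comp (measurable_prodMk_left)
  have : (fun x : E => v.map (T x) s) = fun x => v (Prod.mk x ⁻¹' (Function.uncurry T ⁻¹' s)) := by
    funext x
    rw [Measure.map_apply (hTx x) hs]
    rfl
  rw [this]
  exact measurable_measure_prodMk_left (hT hs)

lemma measurable_gn (hT : Measurable (Function.uncurry T)) (n : ℕ)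
    {A : Set E} (hA : MeasurableSet A) :
    Measurable fun x : E => (Measure.pi fun _ : Fin n => v) {w | Tn T n x w ∈ A} := by
  have : (fun x : E => (Measure.pi fun _ : Fin n => v) {w | Tn T n x w ∈ A})
      = fun x => (Measure.pi fun _ : Fin n => v)
          (Prod.mk x ⁻¹' (Function.uncurry (Tn T n) ⁻¹' A)) := rfl
  rw [this]
  exact measurable_measure_prodMk_left ((measurable_uncurry_Tn hT n) hA)

lemma pi_succ_step (hT : Measurable (Function.uncurry T)) (n : ℕ) (x : E)
    {A : Set E} (hA : MeasurableSet A) :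
    (Measure.pi fun _ : Fin (n+1) => v) {w | Tn T (n+1) x w ∈ A}
      = ∫⁻ y, (Measure.pi fun _ : Fin n => v) {w | Tn T n (T x y) w ∈ A} ∂v := by
  set e := MeasurableEquiv.piFinSuccAbove (fun _ : Fin (n+1) => Wsp) 0 with he
  have mp := measurePreserving_piFinSuccAbove (fun _ : Fin (n+1) => v) 0
  set t : Set (Wsp × (Fin n → Wsp)) := {p | Tn T n (T x p.1) p.2 ∈ A} with ht
  have htm : MeasurableSet t := by
    have hg : Measurable fun p : Wsp × (Fin n → Wsp) => Tn T n (T x p.1) p.2 := by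
      have h1 : Measurable fun p : Wsp × (Fin n → Wsp) => (T x p.1, p.2) :=
        ((hT.comp (measurable_prodMk_left)).comp measurable_fst).prodMk measurable_snd
      exact (measurable_uncurry_Tn hT n).comp h1
    exact hg hA
  have hpre : {w : Fin (n+1) → Wsp | Tn T (n+1) x w ∈ A} = e ⁻¹' t := by
    ext w
    have hew : e w = (w 0, fun i : Fin n => w ((0 : Fin (n+1)).succAbove i)) := rfl
    simp only [mem_setOf_eq, mem_preimage, hew, ht, Tn_succ_left n x w, Fin.zero_succAbove]
  rw [hpre, mp.measure_preimage_equiv]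
  rw [Measure.prod_apply htm]
  rfl

end Aux2

section Aux3

variable {E Wsp : Type*} [MeasurableSpace E] [MeasurableSpace Wsp]
variable {T : E → Wsp → E} {v : Measure Wsp} [IsProbabilityMeasure v]

lemma key [Zero E] {S X : Set E} (hS : MeasurableSet S) (hSX : S ⊆ X) (hzS : (0:E) ∉ S)
    (hSc : ∀ z ∈ X, z ∉ S → z = 0)
    (hTX : ∀ x ∈ X, ∀ y, T x y ∈ X) (heq : ∀ y, T 0 y = 0)
    (hT : Measurable (Function.uncurry T)) :
    ∀ (n : ℕ) (μ : Measure E), μ Sᶜ = 0 →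
      ∀ A : Set E, MeasurableSet A → A ⊆ S →
        ((P1 T v S)^[n] μ) A
          = ∫⁻ x, (Measure.pi fun _ : Fin n => v) {w | Tn T n x w ∈ A} ∂μ := by
  intro n
  induction n with
  | zero =>
      intro μ hμ A hA hAS
      have hpt : ∀ x : E, (Measure.pi fun _ : Fin 0 => v) {w | Tn T 0 x w ∈ A}
          = A.indicator 1 x := by
        intro x
        by_cases hx : x ∈ A
        · have hu : {w : Fin 0 → Wsp | Tn T 0 x w ∈ A} = univ :=
            eq_univ_of_forall fun w => hx
          rw [hu]
          simp [hx]
        · have hu : {w : Fin 0 → Wsp | Tn T 0 x w ∈ A} = ∅ := by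
            ext w; simp [Tn, hx]
          rw [hu]
          simp [hx]
      simp only [Function.iterate_zero, id_eq, hpt]
      rw [lintegral_indicator_one hA]
  | succ n ih =>
      intro μ hμ A hA hAS
      have hzA : (0 : E) ∉ A := fun h => hzS (hAS h)
      rw [Function.iterate_succ_apply]
      have hμ' : (P1 T v S μ) Sᶜ = 0 := by
        rw [P1, Measure.restrict_apply hS.compl]
        simp
      rw [ih (P1 T v S μ) hμ' A hA hAS]
      -- now compute the lintegral against P1 μ
      set g : E → ENNReal := fun x => (Measure.pi fun _ : Fin n => v) {w | Tn T n x w ∈ A} with hg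
      have hgm : Measurable g := measurable_gn hT n hA
      have hg0 : g 0 = 0 := by
        have : {w : Fin n → Wsp | Tn T n 0 w ∈ A} = ∅ := by
          ext w; simp [Tn_zero heq, hzA]
        simp [hg, this]
      have hres : μ.restrict S = μ := by
        apply Measure.restrict_eq_self_of_ae_mem
        rw [← compl_compl S, ← mem_ae_iff] at hμ
        simpa using hμ
      have hTx : ∀ x : E, Measurable (T x) := fun x => hT.comp measurable_prodMk_left
      have step1 : ∫⁻ x, g x ∂(P1 T v S μ)
          = ∫⁻ x, ∫⁻ y, S.indicator g (T x y) ∂v ∂μ := by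
        rw [P1, hres]
        rw [← lintegral_indicator hS]
        rw [Measure.lintegral_bind (measurable_kernel hT).aemeasurable (hgm.indicator hS).aemeasurable]
        congr 1
        funext x
        rw [lintegral_map (hgm.indicator hS) (hTx x)]
      rw [step1]
      apply lintegral_congr_ae
      have haeS : ∀ᵐ x ∂μ, x ∈ S := by
        rw [← compl_compl S, ← mem_ae_iff] at hμ
        simpa using hμ
      filter_upwards [haeS] with x hxS
      have hxX : x ∈ X := hSX hxS
      have hind : ∀ y, S.indicator g (T x y) = g (T x y) := by
        intro y
        by_cases hy : T x y ∈ S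
        · rw [indicator_of_mem hy]
        · rw [indicator_of_notMem hy, hSc _ (hTX x hxX y) hy, hg0]
      simp only [hind]
      rw [← pi_succ_step hT n x hA]

end Aux3


/-- if `[P₁^n m](B) ≤ K βⁿ` for all `n ≥ 1` and all Borel `B ⊆ X \ U(ε)` with
`m(B) > 0`, then for every `α ∈ (β,1)`, every such `B` and every `n ≥ 1`,
`m{x : vⁿ{w : Tⁿ(x,w) ∈ B} ≥ αⁿ} ≤ K (β/α)ⁿ`; in particular `x = 0` is almost everywhere
stochastically stable with geometric decay with respect to `m`. -/
theorem geometric_decay_of_pf_iterates_geometric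
    {d : ℕ} {Wsp : Type*} [MeasurableSpace Wsp]
    (X : Set (EuclideanSpace ℝ (Fin d))) (hX : IsCompact X)
    (v : Measure Wsp) [IsProbabilityMeasure v]
    (T : EuclideanSpace ℝ (Fin d) → Wsp → EuclideanSpace ℝ (Fin d))
    (hT : Measurable (Function.uncurry T))
    (hTX : ∀ x ∈ X, ∀ y, T x y ∈ X)
    (heq : ∀ y : Wsp, T 0 y = 0)
    (ε : ℝ) (hε : 0 < ε)
    (m : Measure (EuclideanSpace ℝ (Fin d))) [IsFiniteMeasure m] (hmX : m Xᶜ = 0)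
    (K : ENNReal) (hK : K < ⊤) (β : ENNReal) (hβ0 : 0 < β) (hβ1 : β < 1)
    (hmain : ∀ n : ℕ, 1 ≤ n →
      ∀ B : Set (EuclideanSpace ℝ (Fin d)), MeasurableSet B → B ⊆ X \ ball 0 ε →
        0 < m B → ((P1 T v (X \ {0}))^[n] m) B ≤ K * β ^ n) :
    ∀ α : ENNReal, β < α → α < 1 →
      ∀ B : Set (EuclideanSpace ℝ (Fin d)), MeasurableSet B → B ⊆ X \ ball 0 ε →
        0 < m B → ∀ n : ℕ, 1 ≤ n →
          m {x : EuclideanSpace ℝ (Fin d) |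
              α ^ n ≤ (Measure.pi fun _ : Fin n => v) {w : Fin n → Wsp | Tn T n x w ∈ B}}
            ≤ K * (β / α) ^ n := by
  intro α hβα hα1 B hBm hBsub hmB n hn
  set S : Set (EuclideanSpace ℝ (Fin d)) := X \ {0} with hSdef
  have hS : MeasurableSet S :=
    hX.isClosed.measurableSet.diff (measurableSet_singleton 0)
  have hzS : (0 : EuclideanSpace ℝ (Fin d)) ∉ S := fun h => h.2 rfl
  have hSc : ∀ z ∈ X, z ∉ S → z = 0 := by
    intro z hz hns
    by_contra h
    exact hns ⟨hz, h⟩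
  have hBS : B ⊆ S := by
    intro x hx
    rcases hBsub hx with ⟨hxX, hxb⟩
    refine ⟨hxX, fun h0 => hxb ?_⟩
    rw [mem_singleton_iff] at h0
    rw [h0]
    exact mem_ball_self hε
  set g : EuclideanSpace ℝ (Fin d) → ENNReal :=
    fun x => (Measure.pi fun _ : Fin n => v) {w | Tn T n x w ∈ B} with hgdef
  have hgm : Measurable g := measurable_gn hT n hBm
  set m' := m.restrict S with hm'def
  have hm' : m' Sᶜ = 0 := by
    rw [hm'def, Measure.restrict_apply hS.compl]
    simp
  have hkey : ((P1 T v S)^[n] m') B = ∫⁻ x, g x ∂m' :=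
    key hS diff_subset hzS hSc hTX heq hT n m' hm' B hBm hBS
  have hP1 : P1 T v S m' = P1 T v S m := by
    rw [P1, P1, hm'def, Measure.restrict_restrict hS, inter_self]
  have hiter : (P1 T v S)^[n] m' = (P1 T v S)^[n] m := by
    obtain ⟨k, rfl⟩ : ∃ k, n = k + 1 := ⟨n - 1, (Nat.succ_pred_eq_of_pos hn).symm⟩
    rw [Function.iterate_succ_apply, Function.iterate_succ_apply, hP1]
  have haeX : ∀ᵐ x ∂m, x ∈ X := by
    rw [← compl_compl X, ← mem_ae_iff] at hmX
    simpa using hmX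
  have hg0 : g 0 = 0 := by
    have hzB : (0 : EuclideanSpace ℝ (Fin d)) ∉ B := fun h => hzS (hBS h)
    have : {w : Fin n → Wsp | Tn T n 0 w ∈ B} = ∅ := by
      ext w; simp [Tn_zero heq, hzB]
    simp [hgdef, this]
  have hint : ∫⁻ x, g x ∂m = ∫⁻ x, g x ∂m' := by
    have hdecomp := lintegral_add_compl g hS (μ := m)
    have hzero : ∫⁻ x in Sᶜ, g x ∂m = 0 := by
      have hae : ∀ᵐ x ∂(m.restrict Sᶜ), g x = 0 := by
        filter_upwards [ae_restrict_mem hS.compl, ae_restrict_of_ae haeX] with x hxS hxX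
        rw [hSc x hxX hxS, hg0]
      rw [lintegral_congr_ae hae, lintegral_zero]
    rw [← hdecomp, hzero, add_zero]
  have hbound : ∫⁻ x, g x ∂m ≤ K * β ^ n := by
    rw [hint, ← hkey, hiter]
    exact hmain n hn B hBm hBsub hmB
  have hmark := mul_meas_ge_le_lintegral₀ hgm.aemeasurable (μ := m) (α ^ n)
  have hα0 : α ≠ 0 := fun h => (hβ0.trans hβα).ne' h
  have hαtop : α ≠ ⊤ := (hα1.trans ENNReal.one_lt_top).ne
  have hchain : α ^ n * m {x | α ^ n ≤ g x} ≤ K * β ^ n := hmark.trans hbound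
  have hfin : m {x | α ^ n ≤ g x} ≤ K * β ^ n / α ^ n := by
    rw [ENNReal.le_div_iff_mul_le (Or.inl (pow_ne_zero n hα0))
      (Or.inl (ENNReal.pow_ne_top hαtop))]
    rwa [mul_comm]
  calc m {x | α ^ n ≤ g x} ≤ K * β ^ n / α ^ n := hfin
    _ = K * (β / α) ^ n := by
        rw [ENNReal.div_eq_inv_mul, ENNReal.div_eq_inv_mul, mul_pow,
          ENNReal.inv_pow]
        ring
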